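/- Let C > 0, let T > 0, and let y : [0,T] → ℝ be continuously differentiable with y(t) > 0 for all t and y'(t) ≤ C(y(t) + y(t)²) for all t ∈ [0,T]. Set y₀ = y(0) and T̃ = (1/(2C))·ln(1 + 1/y₀). Then for every t ∈ [0, min(T, T̃)], y(t) ≤ 1/(e^{−Ct}(y₀^{−1} + 1) − 1), and in particular y(t) ≤ 2 e^{C T̃} y₀. -/

import Mathlib

open MeasureTheory Filter

noncomputable section

/-- Fourier transform with symmetric normalization `f̂(ξ) = (2π)^{-1/2} ∫ e^{-ixξ} f(x) dx`. -/
def FT (f : ℝ → ℂ) (ξ : ℝ) : ℂ :=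
  ((Real.sqrt (2 * Real.pi) : ℝ) : ℂ)⁻¹ * ∫ x : ℝ, Complex.exp (-(Complex.I * (x : ℂ) * (ξ : ℂ))) * f x

/-- Inverse Fourier transform. -/
def FTinv (f : ℝ → ℂ) (x : ℝ) : ℂ :=
  ((Real.sqrt (2 * Real.pi) : ℝ) : ℂ)⁻¹ * ∫ ξ : ℝ, Complex.exp (Complex.I * (x : ℂ) * (ξ : ℂ)) * f ξ

/-- Sobolev `H^s` norm: `(∫ (1+ξ²)^s |f̂(ξ)|² dξ)^{1/2}`. -/
def HsNorm (s : ℝ) (f : ℝ → ℂ) : ℝ :=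
  (∫ ξ : ℝ, (1 + ξ ^ 2) ^ s * ‖FT f ξ‖ ^ 2) ^ (1/2 : ℝ)

/-- Sobolev `H^s` norm of a real-valued function. -/
def HsNormR (s : ℝ) (f : ℝ → ℝ) : ℝ := HsNorm s (fun x => (f x : ℂ))

def L2NormC (f : ℝ → ℂ) : ℝ := (∫ x : ℝ, ‖f x‖ ^ 2) ^ (1/2 : ℝ)

def L2Norm (f : ℝ → ℝ) : ℝ := (∫ x : ℝ, (f x) ^ 2) ^ (1/2 : ℝ)

def L1Norm (f : ℝ → ℝ) : ℝ := ∫ x : ℝ, |f x|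

def LinfNorm (f : ℝ → ℝ) : ℝ := ⨆ x : ℝ, |f x|

def LinfNormC (f : ℝ → ℂ) : ℝ := ⨆ x : ℝ, ‖f x‖

/-- The nonlocal operator `∂ₓΛ⁻²` given by convolution with `-(1/2) sgn(x) e^{-|x|}`. -/
def DxLm2 (w : ℝ → ℝ) (x : ℝ) : ℝ :=
  -(1/2) * ∫ y : ℝ, Real.sign (x - y) * Real.exp (-|x - y|) * w y

/-- `(u, η)` solves the two-component Fornberg–Whitham system
`uₜ + u uₓ = ∂ₓΛ⁻²(η - u)`, `ηₜ + (η u)ₓ = 0` for times in `S`. -/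
def IsFWSolutionOn (S : Set ℝ) (u η : ℝ → ℝ → ℝ) : Prop :=
  ∀ t ∈ S, ∀ x : ℝ,
    HasDerivAt (fun τ => u τ x)
      (-(u t x * deriv (fun y => u t y) x) + DxLm2 (fun y => η t y - u t y) x) t ∧
    HasDerivAt (fun τ => η τ x) (-(deriv (fun y => η t y * u t y) x)) t

/-- Continuity in time with values in `H^s`. -/
def ContInHs (S : Set ℝ) (s : ℝ) (u : ℝ → ℝ → ℝ) : Prop :=
  ∀ t₀ ∈ S, Tendsto (fun t => HsNormR s (fun x => u t x - u t₀ x)) (nhdsWithin t₀ S) (nhds 0)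

/-- The approximate solutions `u^{α,n}`. -/
def uapp (φ ψ : ℝ → ℝ) (s δ α : ℝ) (n : ℕ) (t x : ℝ) : ℝ :=
  (α / n) * ψ (x / (n : ℝ) ^ δ)
    + (n : ℝ) ^ (-s - δ/2) * φ (x / (n : ℝ) ^ δ) * Real.cos (n * x - α * t)

/-- The approximate solutions `η^{α,n}`. -/
def etaapp (ψ : ℝ → ℝ) (δ α : ℝ) (n : ℕ) (_t x : ℝ) : ℝ :=
  (α / n) * ψ (x / (n : ℝ) ^ δ)

/-- The error `E = ∂ₜu^{α,n} + u^{α,n}∂ₓu^{α,n} - ∂ₓΛ⁻²(η^{α,n} - u^{α,n})`. -/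
def Eerr (φ ψ : ℝ → ℝ) (s δ α : ℝ) (n : ℕ) (t x : ℝ) : ℝ :=
  deriv (fun τ => uapp φ ψ s δ α n τ x) t
    + uapp φ ψ s δ α n t x * deriv (fun y => uapp φ ψ s δ α n t y) x
    - DxLm2 (fun y => etaapp ψ δ α n t y - uapp φ ψ s δ α n t y) x

/-- The error `F = ∂ₜη^{α,n} + ∂ₓ(η^{α,n} u^{α,n})`. -/
def Ferr (φ ψ : ℝ → ℝ) (s δ α : ℝ) (n : ℕ) (t x : ℝ) : ℝ :=
  deriv (fun τ => etaapp ψ δ α n τ x) t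
    + deriv (fun y => etaapp ψ δ α n t y * uapp φ ψ s δ α n t y) x

/-- Riccati-type comparison, Remark 2.11: if `y > 0` solves
`y' ≤ C(y + y²)` on `[0,T]`, then on `[0, min(T, T̃)]` with
`T̃ = (1/(2C)) ln(1 + 1/y₀)` one has `y(t) ≤ 1/(e^{-Ct}(y₀⁻¹ + 1) - 1) ≤ 2 e^{CT̃} y₀`. -/
theorem riccati_comparison (C T : ℝ) (hC : 0 < C) (hT : 0 < T) (y y' : ℝ → ℝ)
    (hderiv : ∀ t ∈ Set.Icc (0 : ℝ) T, HasDerivAt y (y' t) t)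
    (hcont : ContinuousOn y' (Set.Icc 0 T))
    (hpos : ∀ t ∈ Set.Icc (0 : ℝ) T, 0 < y t)
    (hineq : ∀ t ∈ Set.Icc (0 : ℝ) T, y' t ≤ C * (y t + (y t) ^ 2)) :
    ∀ t ∈ Set.Icc (0 : ℝ) (min T ((1 / (2 * C)) * Real.log (1 + 1 / y 0))),
      y t ≤ 1 / (Real.exp (-C * t) * ((y 0)⁻¹ + 1) - 1) ∧
      y t ≤ 2 * Real.exp (C * ((1 / (2 * C)) * Real.log (1 + 1 / y 0))) * y 0 := by
  intro t ht
  set y₀ := y 0 with hy₀def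
  have h0T : (0:ℝ) ∈ Set.Icc (0:ℝ) T := ⟨le_refl 0, le_of_lt hT⟩
  have hy0 : 0 < y₀ := hpos 0 h0T
  set A : ℝ := 1 + y₀⁻¹ with hAdef
  have hA1 : 1 < A := by
    have h1 : 0 < y₀⁻¹ := inv_pos.mpr hy0
    simp only [hAdef]
    linarith
  have hlogA : Real.log (1 + 1 / y₀) = Real.log A := by rw [one_div]
  set T' : ℝ := (1 / (2 * C)) * Real.log (1 + 1 / y₀) with hT'def
  set B : ℝ := Real.exp (C * T') with hBdef
  have hCT' : C * T' = Real.log A / 2 := by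
    rw [hT'def, hlogA]
    field_simp
  have hB2 : B ^ 2 = A := by
    rw [hBdef, hCT', ← Real.exp_nat_mul]
    push_cast
    rw [mul_div_cancel₀ _ (two_ne_zero), Real.exp_log (by linarith)]
  have hB1 : 1 < B := by
    rw [hBdef, hCT']
    have : 0 < Real.log A := Real.log_pos hA1
    calc (1:ℝ) = Real.exp 0 := (Real.exp_zero).symm
    _ < Real.exp (Real.log A / 2) := Real.exp_lt_exp.mpr (by linarith)
  -- t is in Icc 0 T
  obtain ⟨ht0, ht1⟩ := ht
  have htT : t ∈ Set.Icc (0:ℝ) T := ⟨ht0, le_trans ht1 (min_le_left _ _)⟩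
  have htT' : t ≤ T' := le_trans ht1 (min_le_right _ _)
  -- the auxiliary monotone function
  set h : ℝ → ℝ := fun τ => Real.exp (C * τ) * ((y τ)⁻¹ + 1) with hhdef
  have hhderiv : ∀ τ ∈ Set.Icc (0:ℝ) T, HasDerivAt h
      (C * Real.exp (C * τ) * ((y τ)⁻¹ + 1) + Real.exp (C * τ) * (-(y' τ) / (y τ) ^ 2)) τ := by
    intro τ hτ
    have hyne : y τ ≠ 0 := ne_of_gt (hpos τ hτ)
    have h1 : HasDerivAt (fun τ : ℝ => Real.exp (C * τ)) (C * Real.exp (C * τ)) τ := by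
      have := ((hasDerivAt_id τ).const_mul C).exp
      simpa [mul_comm] using this
    have h2 : HasDerivAt (fun τ => (y τ)⁻¹ + 1) (-(y' τ) / (y τ) ^ 2) τ :=
      ((hderiv τ hτ).inv hyne).add_const 1
    have := h1.mul h2
    exact this
  have hhderiv_nonneg : ∀ τ ∈ Set.Icc (0:ℝ) T,
      0 ≤ C * Real.exp (C * τ) * ((y τ)⁻¹ + 1) + Real.exp (C * τ) * (-(y' τ) / (y τ) ^ 2) := by
    intro τ hτ
    have hy : 0 < y τ := hpos τ hτ
    have he : 0 < Real.exp (C * τ) := Real.exp_pos _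
    have hkey : y' τ / (y τ) ^ 2 ≤ C * ((y τ)⁻¹ + 1) := by
      rw [div_le_iff₀ (by positivity)]
      have : C * ((y τ)⁻¹ + 1) * y τ ^ 2 = C * (y τ + (y τ) ^ 2) := by
        field_simp
      rw [this]
      exact hineq τ hτ
    have : Real.exp (C * τ) * (y' τ / (y τ) ^ 2) ≤ Real.exp (C * τ) * (C * ((y τ)⁻¹ + 1)) :=
      mul_le_mul_of_nonneg_left hkey (le_of_lt he)
    have hneg : -(y' τ) / (y τ) ^ 2 = -(y' τ / (y τ) ^ 2) := by ring
    rw [hneg]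
    nlinarith
  have hmono : MonotoneOn h (Set.Icc 0 T) := by
    apply monotoneOn_of_deriv_nonneg (convex_Icc 0 T)
    · intro τ hτ
      exact (hhderiv τ hτ).continuousAt.continuousWithinAt
    · intro τ hτ
      rw [interior_Icc] at hτ
      exact (hhderiv τ (Set.mem_Icc_of_Ioo hτ)).differentiableAt.differentiableWithinAt
    · intro τ hτ
      rw [interior_Icc] at hτ
      rw [(hhderiv τ (Set.mem_Icc_of_Ioo hτ)).deriv]
      exact hhderiv_nonneg τ (Set.mem_Icc_of_Ioo hτ)
  have hh0 : h 0 ≤ h t := hmono h0T htT ht0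
  have hyt : 0 < y t := hpos t htT
  have hept : 0 < Real.exp (C * t) := Real.exp_pos _
  -- from monotonicity: exp(-Ct) * A ≤ (y t)⁻¹ + 1
  have hstep : Real.exp (-C * t) * (y₀⁻¹ + 1) ≤ (y t)⁻¹ + 1 := by
    have hh0' : y₀⁻¹ + 1 ≤ Real.exp (C * t) * ((y t)⁻¹ + 1) := by
      have : h 0 = y₀⁻¹ + 1 := by simp [hhdef, hy₀def]
      rw [← this]; exact hh0
    have hexp : Real.exp (-C * t) = (Real.exp (C * t))⁻¹ := by
      rw [← Real.exp_neg]; ring_nf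
    rw [hexp, inv_mul_le_iff₀ hept]
    linarith [hh0']
  -- denominator bound
  have hexpt : Real.exp (-C * t) ≥ B⁻¹ := by
    have : -C * t ≥ -(C * T') := by nlinarith
    rw [hBdef, ← Real.exp_neg]
    exact Real.exp_le_exp.mpr (by linarith)
  have hBpos : 0 < B := by linarith
  have hDB : B - 1 ≤ Real.exp (-C * t) * (y₀⁻¹ + 1) - 1 := by
    have hA' : y₀⁻¹ + 1 = A := by rw [hAdef]; ring
    rw [hA']
    have h1 : B⁻¹ * A ≤ Real.exp (-C * t) * A :=
      mul_le_mul_of_nonneg_right hexpt (by linarith)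
    have h2 : B⁻¹ * A = B := by
      rw [← hB2]
      field_simp
    rw [h2] at h1
    linarith
  have hDpos : 0 < Real.exp (-C * t) * (y₀⁻¹ + 1) - 1 := by linarith
  have hDle : Real.exp (-C * t) * (y₀⁻¹ + 1) - 1 ≤ (y t)⁻¹ := by linarith
  constructor
  · rw [le_div_iff₀ hDpos]
    calc y t * (Real.exp (-C * t) * (y₀⁻¹ + 1) - 1)
        ≤ y t * (y t)⁻¹ := mul_le_mul_of_nonneg_left hDle (le_of_lt hyt)
      _ = 1 := mul_inv_cancel₀ (ne_of_gt hyt)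
  · have hB1' : 0 < B - 1 := by linarith
    have hfirst : y t ≤ 1 / (B - 1) := by
      rw [le_div_iff₀ hB1']
      calc y t * (B - 1) ≤ y t * (Real.exp (-C * t) * (y₀⁻¹ + 1) - 1) :=
            mul_le_mul_of_nonneg_left hDB (le_of_lt hyt)
        _ ≤ y t * (y t)⁻¹ := mul_le_mul_of_nonneg_left hDle (le_of_lt hyt)
        _ = 1 := mul_inv_cancel₀ (ne_of_gt hyt)
    have hsecond : 1 / (B - 1) ≤ 2 * B * y₀ := by
      rw [div_le_iff₀ hB1']
      have hinv : y₀ * y₀⁻¹ = 1 := mul_inv_cancel₀ (ne_of_gt hy0)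
      have hB2' : B ^ 2 = 1 + y₀⁻¹ := by rw [hB2]
      nlinarith [sq_nonneg (2 * y₀ * B - 2 * y₀ - 1), sq_nonneg (B - 1), mul_pos hy0 hBpos]
    calc y t ≤ 1 / (B - 1) := hfirst
      _ ≤ 2 * B * y₀ := hsecond


end
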